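/- For any chain ∅ = μ⁰ ⊆ μ¹ ⊆ ⋯ ⊆ μ^k = μ of partitions in which each μ^j/μ^{j-1} is a horizontal strip of size ν_j, one has ∏_{j=1}^k θ_{μ^j/μ^{j-1}}(q) = (∏_{j=1}^k [ν_j]_q! / ∏_{i≥1} [μ_i − μ_{i+1}]_q!) · ∏_{j=1}^k ψ_{μ^j/μ^{j-1}}(q). -/

import Mathlib

open Finset
open scoped Classical

/-- The `q`-analog `[n]_q = 1 + q + ⋯ + q^{n-1}` as a rational function in `q`. -/
noncomputable def qInt (n : ℕ) : RatFunc ℚ := ∑ i ∈ Finset.range n, RatFunc.X ^ i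

/-- The `q`-factorial `[n]_q!`. -/
noncomputable def qFact : ℕ → RatFunc ℚ
  | 0 => 1
  | n + 1 => qFact n * qInt (n + 1)

/-- The Gaussian binomial coefficient `[a choose b]_q`. -/
noncomputable def qBinom (a b : ℕ) : RatFunc ℚ :=
  if b ≤ a then qFact a / (qFact b * qFact (a - b)) else 0

/-- A function `μ : ℕ → ℕ` is an integer partition (0-indexed parts, trailing zeros). -/
def IsPartitionFun (μ : ℕ → ℕ) : Prop :=
  (∀ i, μ (i + 1) ≤ μ i) ∧ ∃ N, ∀ i, N ≤ i → μ i = 0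

/-- The size `|μ|` of a partition. -/
noncomputable def psize (μ : ℕ → ℕ) : ℕ := ∑ᶠ i, μ i

/-- `μ/ρ` is a horizontal strip: `ρ ⊆ μ` and `μ_{i+1} ≤ ρ_i` for all `i`. -/
def IsHorizStrip (ρ μ : ℕ → ℕ) : Prop :=
  (∀ i, ρ i ≤ μ i) ∧ ∀ i, μ (i + 1) ≤ ρ i

/-- `θ_{μ/ρ}(q) = ([|μ|−|ρ|]_q!/[μ₁−ρ₁]_q!) ∏_{i≥1} [ρ_i−ρ_{i+1} choose μ_{i+1}−ρ_{i+1}]_q`. -/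
noncomputable def theta (μ ρ : ℕ → ℕ) : RatFunc ℚ :=
  (qFact (psize μ - psize ρ) / qFact (μ 0 - ρ 0)) *
    ∏ᶠ i : ℕ, qBinom (ρ i - ρ (i + 1)) (μ (i + 1) - ρ (i + 1))

/-- `ψ_{μ/ρ}(q) = ∏_{i≥1} [μ_i−μ_{i+1} choose μ_i−ρ_i]_q`. -/
noncomputable def psiStrip (μ ρ : ℕ → ℕ) : RatFunc ℚ :=
  ∏ᶠ i : ℕ, qBinom (μ i - μ (i + 1)) (μ i - ρ i)

/-- The chain condition: `∅ = c 0 ⊆ c 1 ⊆ ⋯ ⊆ c k = μ` with each `c (j+1) / c j` a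
horizontal strip of size `ν j`. -/
def IsStripChain (μ ν : ℕ → ℕ) (k : ℕ) (c : Fin (k + 1) → ℕ → ℕ) : Prop :=
  (∀ i, c 0 i = 0) ∧ (∀ i, c (Fin.last k) i = μ i) ∧
  (∀ j : Fin (k + 1), IsPartitionFun (c j)) ∧
  (∀ j : Fin k, IsHorizStrip (c j.castSucc) (c j.succ) ∧
    psize (c j.succ) = psize (c j.castSucc) + ν j.val)

/-- `b_{μν}(q)`: sum over all chains of partitions from `∅` to `μ` with horizontal strips
of sizes `ν 0, …, ν (k-1)` of the product of the `θ` weights. -/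
noncomputable def bPoly (μ ν : ℕ → ℕ) (k : ℕ) : RatFunc ℚ :=
  ∑ᶠ c : Fin (k + 1) → ℕ → ℕ,
    if IsStripChain μ ν k c then ∏ j : Fin k, theta (c j.succ) (c j.castSucc) else 0

lemma qInt_ne_zero {n : ℕ} (hn : 0 < n) : qInt n ≠ 0 := by
  have h : qInt n = algebraMap (Polynomial ℚ) (RatFunc ℚ)
      (∑ i ∈ Finset.range n, Polynomial.X ^ i) := by
    simp [qInt, map_sum, map_pow, RatFunc.algebraMap_X]
  rw [h]
  intro hz
  rw [map_eq_zero_iff _ (RatFunc.algebraMap_injective ℚ)] at hz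
  have := congrArg (Polynomial.eval 1) hz
  simp [Polynomial.eval_finset_sum] at this
  omega

lemma qFact_ne_zero (n : ℕ) : qFact n ≠ 0 := by
  induction n with
  | zero => simp [qFact]
  | succ n ih => exact mul_ne_zero ih (qInt_ne_zero (Nat.succ_pos n))

lemma qBinom_eq (a b : ℕ) (h : b ≤ a) : qBinom a b = qFact a / (qFact b * qFact (a - b)) := by
  simp [qBinom, h]

lemma qBinom_zero : qBinom 0 0 = 1 := by simp [qBinom, qFact]

lemma term_lemma {l l' r r' : ℕ} (h1 : r' ≤ l') (h2 : l' ≤ r) (h3 : r ≤ l) :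
    qBinom (r - r') (l' - r') * (qFact (l - l') * qFact (l' - r')) =
    qBinom (l - l') (l - r) * (qFact (r - r') * qFact (l - r)) := by
  rw [qBinom_eq _ _ (by omega), qBinom_eq _ _ (by omega)]
  have e1 : r - r' - (l' - r') = r - l' := by omega
  have e2 : l - l' - (l - r) = r - l' := by omega
  rw [e1, e2]
  have n1 := qFact_ne_zero (l' - r'); have n2 := qFact_ne_zero (r - l')
  have n3 := qFact_ne_zero (l - r)
  field_simp

lemma finprod_eq_range {f : ℕ → RatFunc ℚ} {N : ℕ} (h : ∀ i, N ≤ i → f i = 1) :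
    ∏ᶠ i, f i = ∏ i ∈ Finset.range N, f i := by
  apply finprod_eq_prod_of_mulSupport_subset
  intro i hi
  simp only [Function.mem_mulSupport] at hi
  simp only [Finset.coe_range, Set.mem_Iio]
  by_contra hcon
  exact hi (h i (by omega))

lemma telescope (g : ℕ → RatFunc ℚ) (hg : ∀ n, g n ≠ 0) (k : ℕ) :
    ∏ j ∈ Finset.range k, (g j / g (j+1)) = g 0 / g k := by
  induction k with
  | zero => simp [div_self (hg 0)]
  | succ k ih =>
    rw [Finset.prod_range_succ, ih, div_mul_div_comm,
      mul_comm (g k) (g (k+1)), mul_div_mul_right _ _ (hg k)]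

lemma theta_eq (lam rho : ℕ → ℕ) (N n : ℕ)
    (hrl : ∀ i, rho i ≤ lam i) (hstrip : ∀ i, lam (i+1) ≤ rho i)
    (hN : ∀ i, N ≤ i → lam i = 0)
    (hn : psize lam - psize rho = n) :
    theta lam rho = qFact n *
      ((∏ i ∈ Finset.range N, qFact (rho i - rho (i+1))) /
        (∏ i ∈ Finset.range N, qFact (lam i - lam (i+1)))) *
      psiStrip lam rho := by
  have hrN : ∀ i, N ≤ i → rho i = 0 := fun i hi =>
    Nat.le_antisymm (hN i hi ▸ hrl i) (Nat.zero_le _)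
  have hT : (∏ᶠ i : ℕ, qBinom (rho i - rho (i + 1)) (lam (i + 1) - rho (i + 1)))
      = ∏ i ∈ Finset.range N, qBinom (rho i - rho (i + 1)) (lam (i + 1) - rho (i + 1)) := by
    apply finprod_eq_range
    intro i hi
    rw [hrN i hi, hrN (i+1) (by omega), hN (i+1) (by omega)]
    exact qBinom_zero
  have hP : (∏ᶠ i : ℕ, qBinom (lam i - lam (i + 1)) (lam i - rho i))
      = ∏ i ∈ Finset.range N, qBinom (lam i - lam (i + 1)) (lam i - rho i) := by
    apply finprod_eq_range
    intro i hi
    rw [hrN i hi, hN i hi, hN (i+1) (by omega)]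
    exact qBinom_zero
  set T := ∏ i ∈ Finset.range N, qBinom (rho i - rho (i + 1)) (lam (i + 1) - rho (i + 1)) with hTdef
  set P := ∏ i ∈ Finset.range N, qBinom (lam i - lam (i + 1)) (lam i - rho i) with hPdef
  set A := ∏ i ∈ Finset.range N, qFact (lam i - lam (i+1)) with hAdef
  set B := ∏ i ∈ Finset.range N, qFact (lam (i+1) - rho (i+1)) with hBdef
  set C := ∏ i ∈ Finset.range N, qFact (rho i - rho (i+1)) with hCdef
  have step1 : T * (A * B) = P * (C * ∏ i ∈ Finset.range N, qFact (lam i - rho i)) := by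
    rw [hTdef, hPdef, hAdef, hBdef, hCdef,
      ← Finset.prod_mul_distrib, ← Finset.prod_mul_distrib,
      ← Finset.prod_mul_distrib, ← Finset.prod_mul_distrib]
    apply Finset.prod_congr rfl
    intro i _
    exact term_lemma (hrl (i+1)) (hstrip i) (hrl i)
  have step2 : (∏ i ∈ Finset.range N, qFact (lam i - rho i)) = qFact (lam 0 - rho 0) * B := by
    have hNterm : qFact (lam N - rho N) = 1 := by rw [hN N le_rfl, hrN N le_rfl]; rfl
    have h1 : (∏ i ∈ Finset.range (N+1), qFact (lam i - rho i))
        = ∏ i ∈ Finset.range N, qFact (lam i - rho i) := by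
      rw [Finset.prod_range_succ, hNterm, mul_one]
    rw [← h1, Finset.prod_range_succ']
    rw [hBdef]; ring
  have hA : A ≠ 0 := Finset.prod_ne_zero_iff.mpr fun i _ => qFact_ne_zero _
  have hB : B ≠ 0 := Finset.prod_ne_zero_iff.mpr fun i _ => qFact_ne_zero _
  have hf0 : qFact (lam 0 - rho 0) ≠ 0 := qFact_ne_zero _
  have step3 : T * A = P * C * qFact (lam 0 - rho 0) := by
    have h0 := step1
    rw [step2] at h0
    have h2 : T * A * B = P * C * qFact (lam 0 - rho 0) * B := by linear_combination h0
    exact mul_right_cancel₀ hB h2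
  rw [theta, psiStrip, hT, hP, hn]
  field_simp
  linear_combination qFact n * step3

/-- For any chain `∅ = c 0 ⊆ ⋯ ⊆ c k = μ` of partitions with `c (j+1)/c j` a horizontal
strip of size `ν j`, one has
`∏_j θ_{c(j+1)/c j}(q) = (∏_j [ν_j]_q! / ∏_i [μ_i − μ_{i+1}]_q!) ⋅ ∏_j ψ_{c(j+1)/c j}(q)`. -/
theorem prod_theta_eq_prod_psi (k : ℕ) (μ ν : ℕ → ℕ)
    (c : Fin (k + 1) → ℕ → ℕ) (hc : IsStripChain μ ν k c) :
    ∏ j : Fin k, theta (c j.succ) (c j.castSucc) =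
      ((∏ j ∈ Finset.range k, qFact (ν j)) / ∏ᶠ i : ℕ, qFact (μ i - μ (i + 1))) *
        ∏ j : Fin k, psiStrip (c j.succ) (c j.castSucc) := by
  obtain ⟨h0, hlast, hpart, hstep⟩ := hc
  obtain ⟨N, hNμ⟩ := (hpart (Fin.last k)).2
  have hμ : ∀ i, N ≤ i → μ i = 0 := fun i hi => (hlast i) ▸ hNμ i hi
  have mono : ∀ j : Fin k, ∀ i, c j.castSucc i ≤ c j.succ i := fun j i => (hstep j).1.1 i
  have hcle : ∀ j : Fin (k+1), ∀ i, c j i ≤ μ i := by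
    intro j i
    have hmono : Monotone (fun j : Fin (k+1) => c j i) :=
      Fin.monotone_iff_le_succ.mpr fun j => mono j i
    calc c j i ≤ c (Fin.last k) i := hmono (Fin.le_last j)
      _ = μ i := hlast i
  have hczero : ∀ j : Fin (k+1), ∀ i, N ≤ i → c j i = 0 := fun j i hi =>
    Nat.le_antisymm ((hμ i hi) ▸ hcle j i) (Nat.zero_le _)
  have per : ∀ j : Fin k, theta (c j.succ) (c j.castSucc) = qFact (ν j.val) *
      ((∏ i ∈ Finset.range N, qFact (c j.castSucc i - c j.castSucc (i+1))) /
        (∏ i ∈ Finset.range N, qFact (c j.succ i - c j.succ (i+1)))) *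
      psiStrip (c j.succ) (c j.castSucc) := by
    intro j
    apply theta_eq
    · exact (hstep j).1.1
    · exact (hstep j).1.2
    · exact hczero j.succ
    · rw [(hstep j).2]; omega
  set g : ℕ → RatFunc ℚ := fun m =>
    ∏ i ∈ Finset.range N,
      qFact (c ⟨min m k, by omega⟩ i - c ⟨min m k, by omega⟩ (i+1)) with hg
  have hgne : ∀ m, g m ≠ 0 := fun m =>
    Finset.prod_ne_zero_iff.mpr fun i _ => qFact_ne_zero _
  have hgcast : ∀ j : Fin k,
      (∏ i ∈ Finset.range N, qFact (c j.castSucc i - c j.castSucc (i+1))) = g j.val := by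
    intro j
    have e : (⟨min (j.val) k, by omega⟩ : Fin (k+1)) = j.castSucc := by
      apply Fin.ext; simp <;> omega
    simp only [hg, e]
  have hgsucc : ∀ j : Fin k,
      (∏ i ∈ Finset.range N, qFact (c j.succ i - c j.succ (i+1))) = g (j.val + 1) := by
    intro j
    have e : (⟨min (j.val + 1) k, by omega⟩ : Fin (k+1)) = j.succ := by
      apply Fin.ext; simp <;> omega
    simp only [hg, e]
  have hg0 : g 0 = 1 := by
    have e : (⟨min 0 k, by omega⟩ : Fin (k+1)) = 0 := by apply Fin.ext; simp
    simp only [hg, e]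
    apply Finset.prod_eq_one
    intro i _
    rw [h0 i, h0 (i+1)]
    rfl
  have hgk : g k = ∏ᶠ i : ℕ, qFact (μ i - μ (i + 1)) := by
    have e : (⟨min k k, by omega⟩ : Fin (k+1)) = Fin.last k := by
      apply Fin.ext; simp [Fin.last]
    have hμfun : c (Fin.last k) = μ := funext hlast
    rw [finprod_eq_range (f := fun i => qFact (μ i - μ (i+1))) (N := N)
      (fun i hi => by show qFact (μ i - μ (i+1)) = 1; rw [hμ i hi, hμ (i+1) (by omega)]; rfl)]
    simp only [hg, e, hμfun]
  calc ∏ j : Fin k, theta (c j.succ) (c j.castSucc)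
      = ∏ j : Fin k, (qFact (ν j.val) * (g j.val / g (j.val + 1)) *
          psiStrip (c j.succ) (c j.castSucc)) := by
        apply Finset.prod_congr rfl
        intro j _
        rw [per j, hgcast j, hgsucc j]
    _ = (∏ j : Fin k, qFact (ν j.val)) * (∏ j : Fin k, (g j.val / g (j.val + 1))) *
          ∏ j : Fin k, psiStrip (c j.succ) (c j.castSucc) := by
        rw [Finset.prod_mul_distrib, Finset.prod_mul_distrib]
    _ = (∏ j ∈ Finset.range k, qFact (ν j)) * (g 0 / g k) *
          ∏ j : Fin k, psiStrip (c j.succ) (c j.castSucc) := by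
        rw [Fin.prod_univ_eq_prod_range (fun j => qFact (ν j)) k,
          Fin.prod_univ_eq_prod_range (fun j => g j / g (j+1)) k,
          telescope g hgne k]
    _ = ((∏ j ∈ Finset.range k, qFact (ν j)) / ∏ᶠ i : ℕ, qFact (μ i - μ (i + 1))) *
          ∏ j : Fin k, psiStrip (c j.succ) (c j.castSucc) := by
        rw [hg0, hgk]; ring
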